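/- Let k, n, G and H be as in the context. If there exist indices x_1, …, x_k ∈ [n] such that the vertices u_{1,x_1}, …, u_{k,x_k} are pairwise adjacent in G (a multicolored clique), then H has a dominating set S with M(v,S) ≤ n+1 for every vertex v of H. -/

import Mathlib

namespace MCCRed

/-- Vertex set of a type-I gadget of order `n`: the heads `h₁, h₂`, the sets
`A = {a_1,…,a_n}` and `D = {d_1,…,d_n}`, and, for each `t ∈ [n]` and each of
the three D-gadgets `D_{a_t,d_t}`, `D_{a_t,h₁}`, `D_{d_t,h₂}` (indexed by
`Fin 3` in this order), its `n+2` private common neighbors. -/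
abbrev IVert (n : ℕ) : Type :=
  (Unit ⊕ Unit) ⊕ ((Fin n ⊕ Fin n) ⊕ (Fin n × Fin 3 × Fin (n + 2)))

/-- The head `h₁`. -/
def h1V (n : ℕ) : IVert n := Sum.inl (Sum.inl ())
/-- The head `h₂`. -/
def h2V (n : ℕ) : IVert n := Sum.inl (Sum.inr ())
/-- The vertex `a_t`. -/
def aIV (n : ℕ) (t : Fin n) : IVert n := Sum.inr (Sum.inl (Sum.inl t))
/-- The vertex `d_t`. -/
def dIV (n : ℕ) (t : Fin n) : IVert n := Sum.inr (Sum.inl (Sum.inr t))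
/-- The `s`-th private vertex of the `w`-th D-gadget at position `t`
(`w = 0`: `D_{a_t,d_t}`, `w = 1`: `D_{a_t,h₁}`, `w = 2`: `D_{d_t,h₂}`). -/
def padV (n : ℕ) (t : Fin n) (w : Fin 3) (s : Fin (n + 2)) : IVert n :=
  Sum.inr (Sum.inr (t, w, s))

/-- Adjacency-generating relation of the type-I gadget:  `h₁h₂`, `h₂` to every
`a_t`, `h₁` to every `d_t`, the heads of each D-gadget are adjacent
(`a_t d_t`, `a_t h₁`, `d_t h₂`), and each of the `n+2` private vertices of a
D-gadget is adjacent exactly to its two heads. -/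
def rI (n : ℕ) : IVert n → IVert n → Prop := fun x y =>
  (x = h1V n ∧ y = h2V n) ∨
  (∃ t, x = h2V n ∧ y = aIV n t) ∨
  (∃ t, x = h1V n ∧ y = dIV n t) ∨
  (∃ t, x = aIV n t ∧ y = dIV n t) ∨
  (∃ t, x = aIV n t ∧ y = h1V n) ∨
  (∃ t, x = dIV n t ∧ y = h2V n) ∨
  (∃ t s, x = padV n t 0 s ∧ (y = aIV n t ∨ y = dIV n t)) ∨
  (∃ t s, x = padV n t 1 s ∧ (y = aIV n t ∨ y = h1V n)) ∨
  (∃ t s, x = padV n t 2 s ∧ (y = dIV n t ∨ y = h2V n))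

/-- The type-I gadget of order `n` as a simple graph. -/
def gadgetI (n : ℕ) : SimpleGraph (IVert n) := SimpleGraph.fromRel (rI n)

/-- Vertex set of a block whose type-I gadgets are indexed by `ι`: the gadget
vertices together with `f`, `f'`, the `c_p` (`p ∈ [n+1]`) and the `b_q`
(`q ∈ [(n+1)(n+2)]`). -/
abbrev BVert (n : ℕ) (ι : Type) : Type :=
  (ι × IVert n) ⊕ ((Unit ⊕ Unit) ⊕ (Fin (n + 1) ⊕ Fin ((n + 1) * (n + 2))))

/-- The copy of gadget vertex `x` inside the gadget indexed by `g`. -/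
def gadV {n : ℕ} {ι : Type} (g : ι) (x : IVert n) : BVert n ι := Sum.inl (g, x)
/-- The block vertex `f`. -/
def fV (n : ℕ) (ι : Type) : BVert n ι := Sum.inr (Sum.inl (Sum.inl ()))
/-- The block vertex `f'`. -/
def f'V (n : ℕ) (ι : Type) : BVert n ι := Sum.inr (Sum.inl (Sum.inr ()))
/-- The block vertex `c_p`; `C'(B) = {c_1,…,c_{n+1}}`. -/
def cV (n : ℕ) (ι : Type) (p : Fin (n + 1)) : BVert n ι := Sum.inr (Sum.inr (Sum.inl p))
/-- The block vertex `b_q`. -/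
def bV (n : ℕ) (ι : Type) (q : Fin ((n + 1) * (n + 2))) : BVert n ι :=
  Sum.inr (Sum.inr (Sum.inr q))

/-- Adjacency-generating relation of a block: the gadget edges inside each
gadget, `f` adjacent to every `a_t` of every gadget, `f f'`, `f'` to each
`c_p`, and `c_p b_q` exactly when `(p-1)(n+2) < q ≤ p(n+2)` (zero-indexed:
`p(n+2) ≤ q < (p+1)(n+2)`). -/
def rB (n : ℕ) (ι : Type) : BVert n ι → BVert n ι → Prop := fun x y =>
  (∃ (g : ι) (a b : IVert n), x = gadV g a ∧ y = gadV g b ∧ rI n a b) ∨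
  (∃ (g : ι) (t : Fin n), x = fV n ι ∧ y = gadV g (aIV n t)) ∨
  (x = fV n ι ∧ y = f'V n ι) ∨
  (∃ p, x = f'V n ι ∧ y = cV n ι p) ∨
  (∃ p q, x = cV n ι p ∧ y = bV n ι q ∧
    p.val * (n + 2) ≤ q.val ∧ q.val < (p.val + 1) * (n + 2))

/-- Ordered pairs of colors `i < j`, indexing the edge-blocks and connectors. -/
abbrev Pairs (k : ℕ) : Type := {p : Fin k × Fin k // p.1 < p.2}

/-- The edges of `G` between color classes `P.1` and `P.2` (the vertex set of
`G` being `Fin k × Fin n`, with `u_{i,ℓ} = (i,ℓ)`): `e = (x,y)` encodes the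
edge `u_{i,x} u_{j,y}`. -/
abbrev EdgeIn {k n : ℕ} (G : SimpleGraph (Fin k × Fin n)) (P : Pairs k) : Type :=
  {e : Fin n × Fin n // G.Adj (P.1.1, e.1) (P.1.2, e.2)}

/-- Vertex set of `H`: the vertex-blocks `H_i` (with one gadget per `ℓ ∈ [n]`),
the edge-blocks `H_{i,j}` (with one gadget per edge in `E_{i,j}`), and for each
pair `i < j` the four connectors, encoded as `(side, kind)` with
`side = false/true` for superscript `i`/`j` and `kind = false/true` for
`r`/`s`. -/
abbrev VHmcc (k n : ℕ) (G : SimpleGraph (Fin k × Fin n)) : Type :=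
  (Fin k × BVert n (Fin n)) ⊕
    ((Σ P : Pairs k, BVert n (EdgeIn G P)) ⊕ (Pairs k × Bool × Bool))

variable {k n : ℕ}

/-- Vertex `x` of the vertex-block `H_i`. -/
def vbV (G : SimpleGraph (Fin k × Fin n)) (i : Fin k) (x : BVert n (Fin n)) :
    VHmcc k n G := Sum.inl (i, x)

/-- Vertex `x` of the edge-block `H_P`. -/
def ebV (G : SimpleGraph (Fin k × Fin n)) (P : Pairs k)
    (x : BVert n (EdgeIn G P)) : VHmcc k n G := Sum.inr (Sum.inl ⟨P, x⟩)

/-- The connector vertex of the pair `P` on side `side` of kind `kind`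
(`kind = false` is `r`, `kind = true` is `s`). -/
def connV (G : SimpleGraph (Fin k × Fin n)) (P : Pairs k) (side kind : Bool) :
    VHmcc k n G := Sum.inr (Sum.inr (P, side, kind))

/-- Adjacency-generating relation of `H`: block edges inside every vertex-block
and every edge-block, plus the connector edges. For a pair `P = (i,j)` with
`i < j`: in gadget `I_ℓ` of `H_i` the vertex `a_t` is adjacent to `s^i_P` iff
`t ≤ ℓ` and to `r^i_P` iff `ℓ ≤ t` (similarly for `H_j`); in gadget `I_e` of
`H_P` with `e = u_{i,x}u_{j,y}`, the vertex `a_t` is adjacent to `r^i_P` iff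
`t ≤ x`, to `s^i_P` iff `x ≤ t`, to `r^j_P` iff `t ≤ y` and to `s^j_P` iff
`y ≤ t`. -/
def rH (k n : ℕ) (G : SimpleGraph (Fin k × Fin n)) :
    VHmcc k n G → VHmcc k n G → Prop := fun x y =>
  (∃ (i : Fin k) (a b : BVert n (Fin n)),
    x = vbV G i a ∧ y = vbV G i b ∧ rB n (Fin n) a b) ∨
  (∃ (P : Pairs k) (a b : BVert n (EdgeIn G P)),
    x = ebV G P a ∧ y = ebV G P b ∧ rB n (EdgeIn G P) a b) ∨
  (∃ (P : Pairs k) (ℓ t : Fin n), x = vbV G P.1.1 (gadV ℓ (aIV n t)) ∧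
    ((t.val ≤ ℓ.val ∧ y = connV G P false true) ∨
     (ℓ.val ≤ t.val ∧ y = connV G P false false))) ∨
  (∃ (P : Pairs k) (ℓ t : Fin n), x = vbV G P.1.2 (gadV ℓ (aIV n t)) ∧
    ((t.val ≤ ℓ.val ∧ y = connV G P true true) ∨
     (ℓ.val ≤ t.val ∧ y = connV G P true false))) ∨
  (∃ (P : Pairs k) (e : EdgeIn G P) (t : Fin n),
    x = ebV G P (gadV e (aIV n t)) ∧
    (((t.val ≤ e.1.1.val ∧ y = connV G P false false) ∨
      (e.1.1.val ≤ t.val ∧ y = connV G P false true)) ∨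
     ((t.val ≤ e.1.2.val ∧ y = connV G P true false) ∨
      (e.1.2.val ≤ t.val ∧ y = connV G P true true))))

/-- The graph `H` output by the reduction from Multi-Colored Clique. -/
def Hmcc (k n : ℕ) (G : SimpleGraph (Fin k × Fin n)) :
    SimpleGraph (VHmcc k n G) := SimpleGraph.fromRel (rH k n G)

/-- `S` is a dominating set. -/
def IsDom {W : Type*} (H : SimpleGraph W) (S : Set W) : Prop :=
  ∀ v, v ∈ S ∨ ∃ u ∈ S, H.Adj v u

/-- Every vertex has membership `M(v,S) = |N[v] ∩ S|` at most `b`. -/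
def MembLE {W : Type*} (H : SimpleGraph W) (S : Set W) (b : ℕ) : Prop :=
  ∀ v, ((insert v (H.neighborSet v)) ∩ S).ncard ≤ b

/-- A path decomposition of `H` with bags `X_1, …, X_m`: every vertex is in
some bag, every edge is inside some bag, and the bags containing a given
vertex are consecutive. -/
def IsPathDecomp {W : Type*} (H : SimpleGraph W) (m : ℕ) (bags : Fin m → Set W) : Prop :=
  (∀ v, ∃ i, v ∈ bags i) ∧
  (∀ u v, H.Adj u v → ∃ i, u ∈ bags i ∧ v ∈ bags i) ∧
  (∀ (v : W) (i j l : Fin m), i ≤ j → j ≤ l → v ∈ bags i → v ∈ bags l → v ∈ bags j)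

end MCCRed
namespace MCCRed
variable {n : ℕ} {ι : Type}

lemma rI_h12 : rI n (h1V n) (h2V n) := Or.inl ⟨rfl, rfl⟩
lemma rI_h2a (t : Fin n) : rI n (h2V n) (aIV n t) := Or.inr (Or.inl ⟨t, rfl, rfl⟩)
lemma rI_h1d (t : Fin n) : rI n (h1V n) (dIV n t) := Or.inr (Or.inr (Or.inl ⟨t, rfl, rfl⟩))
lemma rI_ad (t : Fin n) : rI n (aIV n t) (dIV n t) :=
  Or.inr (Or.inr (Or.inr (Or.inl ⟨t, rfl, rfl⟩)))
lemma rI_ah1 (t : Fin n) : rI n (aIV n t) (h1V n) :=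
  Or.inr (Or.inr (Or.inr (Or.inr (Or.inl ⟨t, rfl, rfl⟩))))
lemma rI_dh2 (t : Fin n) : rI n (dIV n t) (h2V n) :=
  Or.inr (Or.inr (Or.inr (Or.inr (Or.inr (Or.inl ⟨t, rfl, rfl⟩)))))
lemma rI_p0 (t : Fin n) (s : Fin (n+2)) (y : IVert n) (h : y = aIV n t ∨ y = dIV n t) :
    rI n (padV n t 0 s) y :=
  Or.inr (Or.inr (Or.inr (Or.inr (Or.inr (Or.inr (Or.inl ⟨t, s, rfl, h⟩))))))
lemma rI_p1 (t : Fin n) (s : Fin (n+2)) (y : IVert n) (h : y = aIV n t ∨ y = h1V n) :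
    rI n (padV n t 1 s) y :=
  Or.inr (Or.inr (Or.inr (Or.inr (Or.inr (Or.inr (Or.inr (Or.inl ⟨t, s, rfl, h⟩)))))))
lemma rI_p2 (t : Fin n) (s : Fin (n+2)) (y : IVert n) (h : y = dIV n t ∨ y = h2V n) :
    rI n (padV n t 2 s) y :=
  Or.inr (Or.inr (Or.inr (Or.inr (Or.inr (Or.inr (Or.inr (Or.inr ⟨t, s, rfl, h⟩)))))))

lemma rB_gad (g : ι) {a b : IVert n} (h : rI n a b) : rB n ι (gadV g a) (gadV g b) :=
  Or.inl ⟨g, a, b, rfl, rfl, h⟩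
lemma rB_fa (g : ι) (t : Fin n) : rB n ι (fV n ι) (gadV g (aIV n t)) :=
  Or.inr (Or.inl ⟨g, t, rfl, rfl⟩)
lemma rB_ff' : rB n ι (fV n ι) (f'V n ι) := Or.inr (Or.inr (Or.inl ⟨rfl, rfl⟩))
lemma rB_f'c (p : Fin (n+1)) : rB n ι (f'V n ι) (cV n ι p) :=
  Or.inr (Or.inr (Or.inr (Or.inl ⟨p, rfl, rfl⟩)))
lemma rB_cb (p : Fin (n+1)) (q : Fin ((n+1)*(n+2)))
    (h1 : p.val * (n+2) ≤ q.val) (h2 : q.val < (p.val+1) * (n+2)) :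
    rB n ι (cV n ι p) (bV n ι q) :=
  Or.inr (Or.inr (Or.inr (Or.inr ⟨p, q, rfl, rfl, h1, h2⟩)))

/-- The part of the dominating set inside one block, given selected gadget `g0`. -/
def SB (n : ℕ) (ι : Type) (g0 : ι) : Set (BVert n ι) :=
  {z | (∃ t, z = gadV g0 (aIV n t)) ∨ z = gadV g0 (h2V n) ∨
       (∃ g t, g ≠ g0 ∧ z = gadV g (dIV n t)) ∨
       (∃ g, g ≠ g0 ∧ z = gadV g (h1V n)) ∨
       (∃ p, z = cV n ι p)}

lemma SB_a (g0 : ι) (t : Fin n) : gadV g0 (aIV n t) ∈ SB n ι g0 := Or.inl ⟨t, rfl⟩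
lemma SB_h2 (g0 : ι) : gadV g0 (h2V n) ∈ SB n ι g0 := Or.inr (Or.inl rfl)
lemma SB_d {g g0 : ι} (hg : g ≠ g0) (t : Fin n) : gadV g (dIV n t) ∈ SB n ι g0 :=
  Or.inr (Or.inr (Or.inl ⟨g, t, hg, rfl⟩))
lemma SB_h1 {g g0 : ι} (hg : g ≠ g0) : gadV g (h1V n) ∈ SB n ι g0 :=
  Or.inr (Or.inr (Or.inr (Or.inl ⟨g, hg, rfl⟩)))
lemma SB_c (g0 : ι) (p : Fin (n+1)) : cV n ι p ∈ SB n ι g0 :=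
  Or.inr (Or.inr (Or.inr (Or.inr ⟨p, rfl⟩)))

lemma SB_dom (hn : 1 ≤ n) (g0 : ι) (z : BVert n ι) :
    z ∈ SB n ι g0 ∨ ∃ z' ∈ SB n ι g0, z ≠ z' ∧ (rB n ι z z' ∨ rB n ι z' z) := by
  have t0 : Fin n := ⟨0, hn⟩
  obtain ⟨g, (⟨⟨⟩⟩|⟨⟨⟩⟩) | (t|t) | ⟨t,w,s⟩⟩ | (⟨⟨⟩⟩|⟨⟨⟩⟩) | (p|q) := z
  · -- h1
    by_cases hg : g = g0
    · subst hg
      exact Or.inr ⟨gadV g (aIV n t0), SB_a g t0, by simp [gadV, h1V, aIV],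
        Or.inr (rB_gad g (rI_ah1 t0))⟩
    · exact Or.inl (SB_h1 hg)
  · -- h2
    by_cases hg : g = g0
    · subst hg; exact Or.inl (SB_h2 g)
    · exact Or.inr ⟨gadV g (dIV n t0), SB_d hg t0, by simp [gadV, h2V, dIV],
        Or.inr (rB_gad g (rI_dh2 t0))⟩
  · -- a t
    by_cases hg : g = g0
    · subst hg; exact Or.inl (SB_a g t)
    · exact Or.inr ⟨gadV g (dIV n t), SB_d hg t, by simp [gadV, aIV, dIV],
        Or.inl (rB_gad g (rI_ad t))⟩
  · -- d t
    by_cases hg : g = g0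
    · subst hg
      exact Or.inr ⟨gadV g (aIV n t), SB_a g t, by simp [gadV, aIV, dIV],
        Or.inr (rB_gad g (rI_ad t))⟩
    · exact Or.inl (SB_d hg t)
  · -- pad t w s
    right
    by_cases hg : g = g0
    · subst hg
      fin_cases w
      · exact ⟨gadV g (aIV n t), SB_a g t, by simp [gadV, aIV, padV],
          Or.inl (rB_gad g (rI_p0 t s _ (Or.inl rfl)))⟩
      · exact ⟨gadV g (aIV n t), SB_a g t, by simp [gadV, aIV, padV],
          Or.inl (rB_gad g (rI_p1 t s _ (Or.inl rfl)))⟩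
      · exact ⟨gadV g (h2V n), SB_h2 g, by simp [gadV, h2V, padV],
          Or.inl (rB_gad g (rI_p2 t s _ (Or.inr rfl)))⟩
    · fin_cases w
      · exact ⟨gadV g (dIV n t), SB_d hg t, by simp [gadV, dIV, padV],
          Or.inl (rB_gad g (rI_p0 t s _ (Or.inr rfl)))⟩
      · exact ⟨gadV g (h1V n), SB_h1 hg, by simp [gadV, h1V, padV],
          Or.inl (rB_gad g (rI_p1 t s _ (Or.inr rfl)))⟩
      · exact ⟨gadV g (dIV n t), SB_d hg t, by simp [gadV, dIV, padV],
          Or.inl (rB_gad g (rI_p2 t s _ (Or.inl rfl)))⟩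
  · -- f
    exact Or.inr ⟨gadV g0 (aIV n t0), SB_a g0 t0, by simp [gadV, fV],
      Or.inl (rB_fa g0 t0)⟩
  · -- f'
    exact Or.inr ⟨cV n ι 0, SB_c g0 0, by simp [cV, f'V], Or.inl (rB_f'c 0)⟩
  · -- c p
    exact Or.inl (SB_c g0 p)
  · -- b q
    have hq := q.isLt
    have hp : q.val / (n+2) < n + 1 := Nat.div_lt_iff_lt_mul (by omega) |>.mpr (by omega)
    refine Or.inr ⟨cV n ι ⟨q.val / (n+2), hp⟩, SB_c g0 _, by simp [cV, bV],
      Or.inr (rB_cb _ q (Nat.div_mul_le_self _ _) ?_)⟩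
    calc q.val = (n+2)*(q.val/(n+2)) + q.val%(n+2) := (Nat.div_add_mod _ _).symm
      _ < (n+2)*(q.val/(n+2)) + (n+2) :=
          Nat.add_lt_add_left (Nat.mod_lt _ (by omega)) _
      _ = (q.val/(n+2)+1)*(n+2) := by ring

end MCCRed
namespace MCCRed
variable {n : ℕ} {ι : Type}

lemma mem_range_cons_zero {α : Type*} {m : ℕ} (X : α) (Y : Fin m → α) :
    X ∈ Set.range (Fin.cons X Y : Fin (m+1) → α) := ⟨0, Fin.cons_zero _ _⟩
lemma mem_range_cons_succ {α : Type*} {m : ℕ} (X : α) (Y : Fin m → α) (t : Fin m) :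
    Y t ∈ Set.range (Fin.cons X Y : Fin (m+1) → α) := ⟨t.succ, Fin.cons_succ _ _ _⟩

def MembAt (g0 : ι) (z : BVert n ι) (f : Fin (n+1) → BVert n ι) : Prop :=
  ∀ u ∈ SB n ι g0, (u = z ∨ rB n ι z u ∨ rB n ι u z) → u ∈ Set.range f

set_option maxHeartbeats 1000000

lemma memb_h1a {g g0 : ι} (hg : g = g0) :
    MembAt g0 (gadV g (h1V n)) (Fin.cons (gadV g (h2V n)) (fun t' => gadV g (aIV n t'))) := by
  subst hg
  rintro u (⟨t',rfl⟩|rfl|⟨g',t',hg',rfl⟩|⟨g',hg',rfl⟩|⟨p',rfl⟩) h <;>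
    simp [rB, rI, gadV, fV, f'V, cV, bV, h1V, h2V, aIV, dIV, padV] at h
  · exact mem_range_cons_succ _ _ t'
  · exact mem_range_cons_zero _ _
  · exact absurd h hg'
  · exact absurd h hg'

lemma memb_h1b {g g0 : ι} (hg : g ≠ g0) :
    MembAt g0 (gadV g (h1V n)) (Fin.cons (gadV g (h1V n)) (fun t' => gadV g (dIV n t'))) := by
  rintro u (⟨t',rfl⟩|rfl|⟨g',t',hg',rfl⟩|⟨g',hg',rfl⟩|⟨p',rfl⟩) h <;>
    simp [rB, rI, gadV, fV, f'V, cV, bV, h1V, h2V, aIV, dIV, padV] at h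
  · exact absurd h hg
  · exact absurd h.symm hg
  · subst h; exact mem_range_cons_succ _ _ t'
  · subst h; exact mem_range_cons_zero _ _

lemma memb_h2a {g g0 : ι} (hg : g = g0) :
    MembAt g0 (gadV g (h2V n)) (Fin.cons (gadV g (h2V n)) (fun t' => gadV g (aIV n t'))) := by
  subst hg
  rintro u (⟨t',rfl⟩|rfl|⟨g',t',hg',rfl⟩|⟨g',hg',rfl⟩|⟨p',rfl⟩) h <;>
    simp [rB, rI, gadV, fV, f'V, cV, bV, h1V, h2V, aIV, dIV, padV] at h
  · exact mem_range_cons_succ _ _ t'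
  · exact mem_range_cons_zero _ _
  · exact absurd h.symm hg'
  · exact absurd h.symm hg'

lemma memb_h2b {g g0 : ι} (hg : g ≠ g0) :
    MembAt g0 (gadV g (h2V n)) (Fin.cons (gadV g (h1V n)) (fun t' => gadV g (dIV n t'))) := by
  rintro u (⟨t',rfl⟩|rfl|⟨g',t',hg',rfl⟩|⟨g',hg',rfl⟩|⟨p',rfl⟩) h <;>
    simp [rB, rI, gadV, fV, f'V, cV, bV, h1V, h2V, aIV, dIV, padV] at h
  · exact absurd h.symm hg
  · exact absurd h.symm hg
  · subst h; exact mem_range_cons_succ _ _ t'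
  · subst h; exact mem_range_cons_zero _ _

lemma memb_aa {g g0 : ι} (hg : g = g0) (t : Fin n) :
    MembAt g0 (gadV g (aIV n t)) (Fin.cons (gadV g (h2V n)) (fun _ => gadV g (aIV n t))) := by
  subst hg
  rintro u (⟨t',rfl⟩|rfl|⟨g',t',hg',rfl⟩|⟨g',hg',rfl⟩|⟨p',rfl⟩) h <;>
    simp [rB, rI, gadV, fV, f'V, cV, bV, h1V, h2V, aIV, dIV, padV] at h
  · subst h
    first
    | exact mem_range_cons_succ _ _ t
    | exact mem_range_cons_succ _ _ t'
  · exact mem_range_cons_zero _ _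
  · exact absurd h.1.symm hg'
  · exact absurd h hg'

lemma memb_ab {g g0 : ι} (hg : g ≠ g0) (t : Fin n) :
    MembAt g0 (gadV g (aIV n t)) (Fin.cons (gadV g (h1V n)) (fun _ => gadV g (dIV n t))) := by
  rintro u (⟨t',rfl⟩|rfl|⟨g',t',hg',rfl⟩|⟨g',hg',rfl⟩|⟨p',rfl⟩) h <;>
    simp [rB, rI, gadV, fV, f'V, cV, bV, h1V, h2V, aIV, dIV, padV] at h
  · exact absurd h.1.symm hg
  · exact absurd h hg
  · obtain ⟨rfl, rfl⟩ := h
    first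
    | exact mem_range_cons_succ _ _ t
    | exact mem_range_cons_succ _ _ t'
  · subst h; exact mem_range_cons_zero _ _

lemma memb_da {g g0 : ι} (hg : g = g0) (t : Fin n) :
    MembAt g0 (gadV g (dIV n t)) (Fin.cons (gadV g (h2V n)) (fun _ => gadV g (aIV n t))) := by
  subst hg
  rintro u (⟨t',rfl⟩|rfl|⟨g',t',hg',rfl⟩|⟨g',hg',rfl⟩|⟨p',rfl⟩) h <;>
    simp [rB, rI, gadV, fV, f'V, cV, bV, h1V, h2V, aIV, dIV, padV] at h
  · subst h
    first
    | exact mem_range_cons_succ _ _ t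
    | exact mem_range_cons_succ _ _ t'
  · exact mem_range_cons_zero _ _
  · exact absurd h.1 hg'
  · exact absurd h.symm hg'

lemma memb_db {g g0 : ι} (hg : g ≠ g0) (t : Fin n) :
    MembAt g0 (gadV g (dIV n t)) (Fin.cons (gadV g (h1V n)) (fun _ => gadV g (dIV n t))) := by
  rintro u (⟨t',rfl⟩|rfl|⟨g',t',hg',rfl⟩|⟨g',hg',rfl⟩|⟨p',rfl⟩) h <;>
    simp [rB, rI, gadV, fV, f'V, cV, bV, h1V, h2V, aIV, dIV, padV] at h
  · exact absurd h.1.symm hg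
  · exact absurd h.symm hg
  · obtain ⟨rfl, rfl⟩ := h
    first
    | exact mem_range_cons_succ _ _ t
    | exact mem_range_cons_succ _ _ t'
  · subst h; exact mem_range_cons_zero _ _

lemma memb_pa {g g0 : ι} (hg : g = g0) (t : Fin n) (w : Fin 3) (s : Fin (n+2)) :
    MembAt g0 (gadV g (padV n t w s)) (Fin.cons (gadV g (aIV n t)) (fun _ => gadV g (h2V n))) := by
  subst hg
  rintro u (⟨t',rfl⟩|rfl|⟨g',t',hg',rfl⟩|⟨g',hg',rfl⟩|⟨p',rfl⟩) h <;>
    simp [rB, rI, gadV, fV, f'V, cV, bV, h1V, h2V, aIV, dIV, padV] at h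
  · rcases h with ⟨rfl, -⟩ | ⟨rfl, -⟩ <;>
      exact mem_range_cons_zero _ _
  · exact mem_range_cons_succ _ _ t
  · obtain ⟨hgg, -⟩ := h
    exact absurd hgg hg'
  · exact absurd h.1.symm hg'

lemma memb_pb {g g0 : ι} (hg : g ≠ g0) (t : Fin n) (w : Fin 3) (s : Fin (n+2)) :
    MembAt g0 (gadV g (padV n t w s)) (Fin.cons (gadV g (dIV n t)) (fun _ => gadV g (h1V n))) := by
  rintro u (⟨t',rfl⟩|rfl|⟨g',t',hg',rfl⟩|⟨g',hg',rfl⟩|⟨p',rfl⟩) h <;>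
    simp [rB, rI, gadV, fV, f'V, cV, bV, h1V, h2V, aIV, dIV, padV] at h
  · obtain ⟨hgg, -⟩ := h
    exact absurd hgg.symm hg
  · exact absurd h.1 hg
  · obtain ⟨rfl, h⟩ := h
    rcases h with ⟨rfl, -⟩ | ⟨rfl, -⟩ <;>
      exact mem_range_cons_zero _ _
  · obtain ⟨rfl, -⟩ := h
    exact mem_range_cons_succ _ _ t

lemma memb_f (g0 : ι) :
    MembAt g0 (fV n ι) (Fin.cons (f'V n ι) (fun t' => gadV g0 (aIV n t'))) := by
  rintro u (⟨t',rfl⟩|rfl|⟨g',t',hg',rfl⟩|⟨g',hg',rfl⟩|⟨p',rfl⟩) h <;>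
    simp [rB, rI, gadV, fV, f'V, cV, bV, h1V, h2V, aIV, dIV, padV] at h
  exact mem_range_cons_succ _ _ t'

lemma memb_f' (g0 : ι) :
    MembAt g0 (f'V n ι) (fun p => cV n ι p) := by
  rintro u (⟨t',rfl⟩|rfl|⟨g',t',hg',rfl⟩|⟨g',hg',rfl⟩|⟨p',rfl⟩) h <;>
    simp [rB, rI, gadV, fV, f'V, cV, bV, h1V, h2V, aIV, dIV, padV] at h
  exact ⟨p', rfl⟩

lemma memb_c (g0 : ι) (p : Fin (n+1)) :
    MembAt g0 (cV n ι p) (fun _ => cV n ι p) := by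
  rintro u (⟨t',rfl⟩|rfl|⟨g',t',hg',rfl⟩|⟨g',hg',rfl⟩|⟨p',rfl⟩) h <;>
    simp [rB, rI, gadV, fV, f'V, cV, bV, h1V, h2V, aIV, dIV, padV] at h
  exact ⟨0, by rw [h]⟩

lemma memb_b (g0 : ι) (q : Fin ((n+1)*(n+2))) :
    MembAt g0 (bV n ι q) (fun p => cV n ι p) := by
  rintro u (⟨t',rfl⟩|rfl|⟨g',t',hg',rfl⟩|⟨g',hg',rfl⟩|⟨p',rfl⟩) h <;>
    simp [rB, rI, gadV, fV, f'V, cV, bV, h1V, h2V, aIV, dIV, padV] at h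
  exact ⟨p', rfl⟩

lemma SB_memb (g0 : ι) (z : BVert n ι) :
    ∃ f : Fin (n+1) → BVert n ι, MembAt g0 z f := by
  obtain ⟨g, (⟨⟨⟩⟩|⟨⟨⟩⟩) | (t|t) | ⟨t,w,s⟩⟩ | (⟨⟨⟩⟩|⟨⟨⟩⟩) | (p|q) := z
  · by_cases hg : g = g0
    exacts [⟨_, memb_h1a hg⟩, ⟨_, memb_h1b hg⟩]
  · by_cases hg : g = g0
    exacts [⟨_, memb_h2a hg⟩, ⟨_, memb_h2b hg⟩]
  · by_cases hg : g = g0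
    exacts [⟨_, memb_aa hg t⟩, ⟨_, memb_ab hg t⟩]
  · by_cases hg : g = g0
    exacts [⟨_, memb_da hg t⟩, ⟨_, memb_db hg t⟩]
  · by_cases hg : g = g0
    exacts [⟨_, memb_pa hg t w s⟩, ⟨_, memb_pb hg t w s⟩]
  · exact ⟨_, memb_f g0⟩
  · exact ⟨_, memb_f' g0⟩
  · exact ⟨_, memb_c g0 p⟩
  · exact ⟨_, memb_b g0 q⟩
end MCCRed
namespace MCCRed
variable {k n : ℕ} {G : SimpleGraph (Fin k × Fin n)}

set_option maxHeartbeats 1000000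

lemma rH_vb_inv (i : Fin k) (z : BVert n (Fin n)) (u : VHmcc k n G)
    (h : rH k n G (vbV G i z) u ∨ rH k n G u (vbV G i z)) :
    (∃ z', u = vbV G i z' ∧ (rB n (Fin n) z z' ∨ rB n (Fin n) z' z)) ∨
    (∃ P s kk, u = connV G P s kk) := by
  rcases h with (h|h|h|h|h) | (h|h|h|h|h)
  · obtain ⟨i', a, b, he1, he2, hr⟩ := h
    simp only [vbV, Sum.inl.injEq, Prod.mk.injEq] at he1
    obtain ⟨rfl, rfl⟩ := he1
    exact Or.inl ⟨b, he2, Or.inl hr⟩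
  · obtain ⟨P, a, b, he1, -⟩ := h; simp [vbV, ebV] at he1
  · obtain ⟨P, ℓ, t, he1, (⟨-, he2⟩|⟨-, he2⟩)⟩ := h <;> exact Or.inr ⟨P, _, _, he2⟩
  · obtain ⟨P, ℓ, t, he1, (⟨-, he2⟩|⟨-, he2⟩)⟩ := h <;> exact Or.inr ⟨P, _, _, he2⟩
  · obtain ⟨P, e, t, he1, -⟩ := h; simp [vbV, ebV] at he1
  · obtain ⟨i', a, b, he1, he2, hr⟩ := h
    simp only [vbV, Sum.inl.injEq, Prod.mk.injEq] at he2
    obtain ⟨rfl, rfl⟩ := he2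
    exact Or.inl ⟨a, he1, Or.inr hr⟩
  · obtain ⟨P, a, b, -, he2, -⟩ := h; simp [vbV, ebV] at he2
  · obtain ⟨P, ℓ, t, -, (⟨-, he2⟩|⟨-, he2⟩)⟩ := h <;> simp [vbV, connV] at he2
  · obtain ⟨P, ℓ, t, -, (⟨-, he2⟩|⟨-, he2⟩)⟩ := h <;> simp [vbV, connV] at he2
  · obtain ⟨P, e, t, -, ((⟨-, he2⟩|⟨-, he2⟩)|(⟨-, he2⟩|⟨-, he2⟩))⟩ := h <;>
      simp [vbV, connV] at he2

lemma rH_eb_inv (P : Pairs k) (z : BVert n (EdgeIn G P)) (u : VHmcc k n G)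
    (h : rH k n G (ebV G P z) u ∨ rH k n G u (ebV G P z)) :
    (∃ z', u = ebV G P z' ∧ (rB n (EdgeIn G P) z z' ∨ rB n (EdgeIn G P) z' z)) ∨
    (∃ P' s kk, u = connV G P' s kk) := by
  rcases h with (h|h|h|h|h) | (h|h|h|h|h)
  · obtain ⟨i', a, b, he1, -⟩ := h; simp [vbV, ebV] at he1
  · obtain ⟨P', a, b, he1, he2, hr⟩ := h
    simp only [ebV, Sum.inr.injEq, Sum.inl.injEq] at he1
    obtain ⟨rfl, he1⟩ := Sigma.mk.inj_iff.mp he1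
    rw [heq_eq_eq] at he1; subst he1
    exact Or.inl ⟨b, he2, Or.inl hr⟩
  · obtain ⟨P', ℓ, t, he1, -⟩ := h; simp [vbV, ebV] at he1
  · obtain ⟨P', ℓ, t, he1, -⟩ := h; simp [vbV, ebV] at he1
  · obtain ⟨P', e, t, he1, ((⟨-, he2⟩|⟨-, he2⟩)|(⟨-, he2⟩|⟨-, he2⟩))⟩ := h
    all_goals exact Or.inr ⟨P', _, _, he2⟩
  · obtain ⟨i', a, b, -, he2, -⟩ := h; simp [vbV, ebV] at he2
  · obtain ⟨P', a, b, he1, he2, hr⟩ := h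
    simp only [ebV, Sum.inr.injEq, Sum.inl.injEq] at he2
    obtain ⟨rfl, he2⟩ := Sigma.mk.inj_iff.mp he2
    rw [heq_eq_eq] at he2; subst he2
    exact Or.inl ⟨a, he1, Or.inr hr⟩
  · obtain ⟨P', ℓ, t, -, (⟨-, he2⟩|⟨-, he2⟩)⟩ := h <;> simp [ebV, connV] at he2
  · obtain ⟨P', ℓ, t, -, (⟨-, he2⟩|⟨-, he2⟩)⟩ := h <;> simp [ebV, connV] at he2
  · obtain ⟨P', e, t, -, ((⟨-, he2⟩|⟨-, he2⟩)|(⟨-, he2⟩|⟨-, he2⟩))⟩ := h <;>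
      simp [ebV, connV] at he2

lemma rH_conn_inv (P : Pairs k) (side kind : Bool) (u : VHmcc k n G)
    (h : rH k n G (connV G P side kind) u ∨ rH k n G u (connV G P side kind)) :
    (∃ ℓ t : Fin n, u = vbV G (if side then P.1.2 else P.1.1) (gadV ℓ (aIV n t)) ∧
       ((kind = true ∧ t.val ≤ ℓ.val) ∨ (kind = false ∧ ℓ.val ≤ t.val))) ∨
    (∃ (e : EdgeIn G P) (t : Fin n), u = ebV G P (gadV e (aIV n t)) ∧
       ((kind = false ∧ t.val ≤ (if side then e.1.2 else e.1.1).val) ∨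
        (kind = true ∧ (if side then e.1.2 else e.1.1).val ≤ t.val))) := by
  rcases h with (h|h|h|h|h) | (h|h|h|h|h)
  · obtain ⟨i', a, b, he1, -⟩ := h; simp [vbV, connV] at he1
  · obtain ⟨P', a, b, he1, -⟩ := h; simp [ebV, connV] at he1
  · obtain ⟨P', ℓ, t, he1, -⟩ := h; simp [vbV, connV] at he1
  · obtain ⟨P', ℓ, t, he1, -⟩ := h; simp [vbV, connV] at he1
  · obtain ⟨P', e, t, he1, -⟩ := h; simp [ebV, connV] at he1
  · obtain ⟨i', a, b, -, he2, -⟩ := h; simp [vbV, connV] at he2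
  · obtain ⟨P', a, b, -, he2, -⟩ := h; simp [ebV, connV] at he2
  · obtain ⟨P', ℓ, t, he1, (⟨hle, he2⟩|⟨hle, he2⟩)⟩ := h <;>
      · simp only [connV, Sum.inr.injEq, Prod.mk.injEq] at he2
        obtain ⟨rfl, rfl, rfl⟩ := he2
        exact Or.inl ⟨ℓ, t, by simpa using he1, by simp [hle]⟩
  · obtain ⟨P', ℓ, t, he1, (⟨hle, he2⟩|⟨hle, he2⟩)⟩ := h <;>
      · simp only [connV, Sum.inr.injEq, Prod.mk.injEq] at he2
        obtain ⟨rfl, rfl, rfl⟩ := he2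
        exact Or.inl ⟨ℓ, t, by simpa using he1, by simp [hle]⟩
  · obtain ⟨P', e, t, he1, ((⟨hle, he2⟩|⟨hle, he2⟩)|(⟨hle, he2⟩|⟨hle, he2⟩))⟩ := h <;>
      · simp only [connV, Sum.inr.injEq, Prod.mk.injEq] at he2
        obtain ⟨rfl, rfl, rfl⟩ := he2
        exact Or.inr ⟨e, t, by simpa using he1, by simp [hle]⟩

end MCCRed
namespace MCCRed
variable {k n : ℕ} {G : SimpleGraph (Fin k × Fin n)}

lemma ncard_le_of_subset_range {V : Type*} {A : Set V} {m : ℕ} (f : Fin m → V)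
    (h : A ⊆ Set.range f) : A.ncard ≤ m := by
  have h1 : A.ncard ≤ (Set.range f).ncard := Set.ncard_le_ncard h (Set.finite_range f)
  have h2 : (Set.range f).ncard ≤ m := by
    rw [← Set.image_univ]
    calc (f '' Set.univ).ncard ≤ (Set.univ : Set (Fin m)).ncard :=
          Set.ncard_image_le Set.finite_univ
      _ = m := by rw [Set.ncard_univ, Nat.card_eq_fintype_card, Fintype.card_fin]
  omega

lemma hmcc_adj_iff {v u : VHmcc k n G} :
    (Hmcc k n G).Adj v u ↔ v ≠ u ∧ (rH k n G v u ∨ rH k n G u v) := by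
  simp [Hmcc, SimpleGraph.fromRel_adj]

lemma rH_vbB {i : Fin k} {z z' : BVert n (Fin n)} (h : rB n (Fin n) z z') :
    rH k n G (vbV G i z) (vbV G i z') := Or.inl ⟨i, z, z', rfl, rfl, h⟩

lemma rH_ebB {P : Pairs k} {z z' : BVert n (EdgeIn G P)} (h : rB n (EdgeIn G P) z z') :
    rH k n G (ebV G P z) (ebV G P z') := Or.inr (Or.inl ⟨P, z, z', rfl, rfl, h⟩)

lemma rH_conn1 (P : Pairs k) (ℓ t : Fin n) (kind : Bool)
    (h : (kind = true ∧ t.val ≤ ℓ.val) ∨ (kind = false ∧ ℓ.val ≤ t.val)) :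
    rH k n G (vbV G P.1.1 (gadV ℓ (aIV n t))) (connV G P false kind) := by
  refine Or.inr (Or.inr (Or.inl ⟨P, ℓ, t, rfl, ?_⟩))
  rcases h with ⟨rfl, h⟩ | ⟨rfl, h⟩
  exacts [Or.inl ⟨h, rfl⟩, Or.inr ⟨h, rfl⟩]

lemma rH_conn2 (P : Pairs k) (ℓ t : Fin n) (kind : Bool)
    (h : (kind = true ∧ t.val ≤ ℓ.val) ∨ (kind = false ∧ ℓ.val ≤ t.val)) :
    rH k n G (vbV G P.1.2 (gadV ℓ (aIV n t))) (connV G P true kind) := by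
  refine Or.inr (Or.inr (Or.inr (Or.inl ⟨P, ℓ, t, rfl, ?_⟩)))
  rcases h with ⟨rfl, h⟩ | ⟨rfl, h⟩
  exacts [Or.inl ⟨h, rfl⟩, Or.inr ⟨h, rfl⟩]

end MCCRed


namespace MCCRed
variable {k n : ℕ} {G : SimpleGraph (Fin k × Fin n)}

lemma rH_conn_inv_ff (P : Pairs k) (u : VHmcc k n G)
    (h : rH k n G (connV G P false false) u ∨ rH k n G u (connV G P false false)) :
    (∃ ℓ t : Fin n, u = vbV G P.1.1 (gadV ℓ (aIV n t)) ∧ ℓ.val ≤ t.val) ∨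
    (∃ (e : EdgeIn G P) (t : Fin n), u = ebV G P (gadV e (aIV n t)) ∧ t.val ≤ e.1.1.val) := by
  rcases rH_conn_inv P false false u h with ⟨ℓ, t, hu, hc⟩ | ⟨e, t, hu, hc⟩
  · rcases hc with ⟨habs, -⟩ | ⟨-, hle⟩
    · simp at habs
    · exact Or.inl ⟨ℓ, t, by simpa using hu, hle⟩
  · rcases hc with ⟨-, hle⟩ | ⟨habs, -⟩
    · exact Or.inr ⟨e, t, by simpa using hu, by simpa using hle⟩
    · simp at habs

lemma rH_conn_inv_ft (P : Pairs k) (u : VHmcc k n G)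
    (h : rH k n G (connV G P false true) u ∨ rH k n G u (connV G P false true)) :
    (∃ ℓ t : Fin n, u = vbV G P.1.1 (gadV ℓ (aIV n t)) ∧ t.val ≤ ℓ.val) ∨
    (∃ (e : EdgeIn G P) (t : Fin n), u = ebV G P (gadV e (aIV n t)) ∧ e.1.1.val ≤ t.val) := by
  rcases rH_conn_inv P false true u h with ⟨ℓ, t, hu, hc⟩ | ⟨e, t, hu, hc⟩
  · rcases hc with ⟨-, hle⟩ | ⟨habs, -⟩
    · exact Or.inl ⟨ℓ, t, by simpa using hu, hle⟩
    · simp at habs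
  · rcases hc with ⟨habs, -⟩ | ⟨-, hle⟩
    · simp at habs
    · exact Or.inr ⟨e, t, by simpa using hu, by simpa using hle⟩

lemma rH_conn_inv_tf (P : Pairs k) (u : VHmcc k n G)
    (h : rH k n G (connV G P true false) u ∨ rH k n G u (connV G P true false)) :
    (∃ ℓ t : Fin n, u = vbV G P.1.2 (gadV ℓ (aIV n t)) ∧ ℓ.val ≤ t.val) ∨
    (∃ (e : EdgeIn G P) (t : Fin n), u = ebV G P (gadV e (aIV n t)) ∧ t.val ≤ e.1.2.val) := by
  rcases rH_conn_inv P true false u h with ⟨ℓ, t, hu, hc⟩ | ⟨e, t, hu, hc⟩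
  · rcases hc with ⟨habs, -⟩ | ⟨-, hle⟩
    · simp at habs
    · exact Or.inl ⟨ℓ, t, by simpa using hu, hle⟩
  · rcases hc with ⟨-, hle⟩ | ⟨habs, -⟩
    · exact Or.inr ⟨e, t, by simpa using hu, by simpa using hle⟩
    · simp at habs

lemma rH_conn_inv_tt (P : Pairs k) (u : VHmcc k n G)
    (h : rH k n G (connV G P true true) u ∨ rH k n G u (connV G P true true)) :
    (∃ ℓ t : Fin n, u = vbV G P.1.2 (gadV ℓ (aIV n t)) ∧ t.val ≤ ℓ.val) ∨
    (∃ (e : EdgeIn G P) (t : Fin n), u = ebV G P (gadV e (aIV n t)) ∧ e.1.2.val ≤ t.val) := by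
  rcases rH_conn_inv P true true u h with ⟨ℓ, t, hu, hc⟩ | ⟨e, t, hu, hc⟩
  · rcases hc with ⟨-, hle⟩ | ⟨habs, -⟩
    · exact Or.inl ⟨ℓ, t, by simpa using hu, hle⟩
    · simp at habs
  · rcases hc with ⟨habs, -⟩ | ⟨-, hle⟩
    · simp at habs
    · exact Or.inr ⟨e, t, by simpa using hu, by simpa using hle⟩
end MCCRed

open MCCRed in
/-- If `G` (on vertex set `Fin k × Fin n`, color classes `V_i = {i} × Fin n`)
has a multicolored clique, then `H` has a dominating set `S` with
`M(v,S) ≤ n+1` for every vertex `v` of `H`. -/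
theorem stmt_12 (k n : ℕ) (hk : 2 ≤ k) (hn : 1 ≤ n)
    (G : SimpleGraph (Fin k × Fin n))
    (hclq : ∃ x : Fin k → Fin n, ∀ i j : Fin k, i ≠ j → G.Adj (i, x i) (j, x j)) :
    ∃ S : Set (VHmcc k n G),
      IsDom (Hmcc k n G) S ∧ MembLE (Hmcc k n G) S (n + 1) := by
  classical
  obtain ⟨x, hx⟩ := hclq
  have hPne : ∀ P : Pairs k, (P.1.1 : Fin k) ≠ P.1.2 := fun P => ne_of_lt P.2
  refine ⟨(⋃ i, vbV G i '' SB n (Fin n) (x i)) ∪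
    (⋃ P, ebV G P '' SB n (EdgeIn G P) (⟨(x P.1.1, x P.1.2), hx _ _ (hPne P)⟩ : EdgeIn G P)),
    ?_, ?_⟩
  · -- IsDom
    intro v
    rcases v with ⟨i, z⟩ | (⟨P, z⟩ | ⟨P, side, kind⟩)
    · rcases SB_dom hn (x i) z with hz | ⟨z', hz', hne, hr⟩
      · exact Or.inl (Set.mem_union_left _ (Set.mem_iUnion.2 ⟨i, Set.mem_image_of_mem _ hz⟩))
      · refine Or.inr ⟨vbV G i z',
          Set.mem_union_left _ (Set.mem_iUnion.2 ⟨i, Set.mem_image_of_mem _ hz'⟩),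
          hmcc_adj_iff.mpr ⟨?_, ?_⟩⟩
        · intro hh; exact hne (by simpa [vbV] using hh)
        · rcases hr with h | h
          exacts [Or.inl (rH_vbB h), Or.inr (rH_vbB h)]
    · rcases SB_dom hn (⟨(x P.1.1, x P.1.2), hx _ _ (hPne P)⟩ : EdgeIn G P) z with
        hz | ⟨z', hz', hne, hr⟩
      · exact Or.inl (Set.mem_union_right _ (Set.mem_iUnion.2 ⟨P, Set.mem_image_of_mem _ hz⟩))
      · refine Or.inr ⟨ebV G P z',
          Set.mem_union_right _ (Set.mem_iUnion.2 ⟨P, Set.mem_image_of_mem _ hz'⟩),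
          hmcc_adj_iff.mpr ⟨?_, ?_⟩⟩
        · intro hh; exact hne (by simpa [ebV] using hh)
        · rcases hr with h | h
          exacts [Or.inl (rH_ebB h), Or.inr (rH_ebB h)]
    · cases side
      · refine Or.inr ⟨vbV G P.1.1 (gadV (x P.1.1) (aIV n (x P.1.1))),
          Set.mem_union_left _ (Set.mem_iUnion.2 ⟨P.1.1, Set.mem_image_of_mem _ (SB_a _ _)⟩),
          hmcc_adj_iff.mpr ⟨by simp [vbV, connV], Or.inr (rH_conn1 P _ _ kind ?_)⟩⟩
        cases kind
        exacts [Or.inr ⟨rfl, le_refl _⟩, Or.inl ⟨rfl, le_refl _⟩]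
      · refine Or.inr ⟨vbV G P.1.2 (gadV (x P.1.2) (aIV n (x P.1.2))),
          Set.mem_union_left _ (Set.mem_iUnion.2 ⟨P.1.2, Set.mem_image_of_mem _ (SB_a _ _)⟩),
          hmcc_adj_iff.mpr ⟨by simp [vbV, connV], Or.inr (rH_conn2 P _ _ kind ?_)⟩⟩
        cases kind
        exacts [Or.inr ⟨rfl, le_refl _⟩, Or.inl ⟨rfl, le_refl _⟩]
  · -- MembLE
    intro v
    rcases v with ⟨i, z⟩ | (⟨P, z⟩ | ⟨P, side, kind⟩)
    · obtain ⟨f, hf⟩ := SB_memb (x i) z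
      apply ncard_le_of_subset_range (fun m => vbV G i (f m))
      rintro u ⟨h1, h2⟩
      rw [Set.mem_insert_iff, SimpleGraph.mem_neighborSet] at h1
      rcases h2 with h2 | h2
      · rw [Set.mem_iUnion] at h2
        obtain ⟨j, z', hz', rfl⟩ := h2
        rcases h1 with h1 | h1
        · simp only [vbV, Sum.inl.injEq, Prod.mk.injEq] at h1
          obtain ⟨rfl, rfl⟩ := h1
          obtain ⟨m, hm⟩ := hf _ hz' (Or.inl rfl)
          exact ⟨m, by simp [hm]⟩
        · have hr := (hmcc_adj_iff.mp h1).2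
          rcases rH_vb_inv i z _ hr with ⟨z'', hu, hrB⟩ | ⟨P', s', kk', hu⟩
          · simp only [vbV, Sum.inl.injEq, Prod.mk.injEq] at hu
            obtain ⟨rfl, rfl⟩ := hu
            obtain ⟨m, hm⟩ := hf _ hz' (Or.inr hrB)
            exact ⟨m, by simp [hm]⟩
          · simp [vbV, connV] at hu
      · rw [Set.mem_iUnion] at h2
        obtain ⟨P', z', hz', rfl⟩ := h2
        rcases h1 with h1 | h1
        · simp [ebV, vbV] at h1
        · have hr := (hmcc_adj_iff.mp h1).2
          rcases rH_vb_inv i z _ hr with ⟨z'', hu, hrB⟩ | ⟨P'', s', kk', hu⟩ <;>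
            simp [vbV, ebV, connV] at hu
    · obtain ⟨f, hf⟩ := SB_memb (⟨(x P.1.1, x P.1.2), hx _ _ (hPne P)⟩ : EdgeIn G P) z
      apply ncard_le_of_subset_range (fun m => ebV G P (f m))
      rintro u ⟨h1, h2⟩
      rw [Set.mem_insert_iff, SimpleGraph.mem_neighborSet] at h1
      rcases h2 with h2 | h2
      · rw [Set.mem_iUnion] at h2
        obtain ⟨j, z', hz', rfl⟩ := h2
        rcases h1 with h1 | h1
        · simp [vbV, ebV] at h1
        · have hr := (hmcc_adj_iff.mp h1).2
          rcases rH_eb_inv P z _ hr with ⟨z'', hu, hrB⟩ | ⟨P'', s', kk', hu⟩ <;>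
            simp [vbV, ebV, connV] at hu
      · rw [Set.mem_iUnion] at h2
        obtain ⟨P', z', hz', rfl⟩ := h2
        rcases h1 with h1 | h1
        · simp only [ebV, Sum.inr.injEq, Sum.inl.injEq] at h1
          obtain ⟨rfl, h1⟩ := Sigma.mk.inj_iff.mp h1
          rw [heq_eq_eq] at h1; subst h1
          obtain ⟨m, hm⟩ := hf _ hz' (Or.inl rfl)
          exact ⟨m, by simp [hm]⟩
        · have hr := (hmcc_adj_iff.mp h1).2
          rcases rH_eb_inv P z _ hr with ⟨z'', hu, hrB⟩ | ⟨P'', s', kk', hu⟩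
          · simp only [ebV, Sum.inr.injEq, Sum.inl.injEq] at hu
            obtain ⟨rfl, hu⟩ := Sigma.mk.inj_iff.mp hu
            rw [heq_eq_eq] at hu; subst hu
            obtain ⟨m, hm⟩ := hf _ hz' (Or.inr hrB)
            exact ⟨m, by simp [hm]⟩
          · simp [ebV, connV] at hu
    · cases side <;> cases kind
      · apply ncard_le_of_subset_range (fun m : Fin (n+1) =>
          if h : m.val ≤ (x P.1.1).val
          then ebV G P (gadV (⟨(x P.1.1, x P.1.2), hx _ _ (hPne P)⟩ : EdgeIn G P) (aIV n ⟨m.val, lt_of_le_of_lt h (x P.1.1).isLt⟩))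
          else vbV G P.1.1 (gadV (x P.1.1) (aIV n ⟨m.val - 1, by have := m.isLt; omega⟩)))
        rintro u ⟨h1, h2⟩
        rw [Set.mem_insert_iff, SimpleGraph.mem_neighborSet] at h1
        rcases h1 with h1 | h1
        · subst h1
          rcases h2 with h2 | h2 <;> rw [Set.mem_iUnion] at h2 <;>
            obtain ⟨j, z', hz', hj⟩ := h2 <;> simp [vbV, ebV, connV] at hj
        · have hr := (hmcc_adj_iff.mp h1).2
          rcases rH_conn_inv_ff P _ hr with ⟨ℓ, t, hu, hle⟩ | ⟨e, t, hu, hle⟩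
          · subst hu
            rcases h2 with h2 | h2 <;> rw [Set.mem_iUnion] at h2
            · obtain ⟨j, z', hz', hj⟩ := h2
              simp only [vbV, Sum.inl.injEq, Prod.mk.injEq] at hj
              obtain ⟨rfl, rfl⟩ := hj
              rcases hz' with ⟨t'', hz'⟩ | hz' | ⟨g'', t'', -, hz'⟩ | ⟨g'', -, hz'⟩ | ⟨p'', hz'⟩ <;>
                simp [gadV, aIV, dIV, h1V, h2V, cV] at hz'
              obtain ⟨rfl, rfl⟩ := hz'
              have hle' : (x P.1.1).val ≤ t.val := hle
              refine ⟨⟨t.val + 1, by have := t.isLt; omega⟩, ?_⟩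
              beta_reduce
              split
              · next hcond =>
                  exact absurd (show t.val + 1 ≤ (x P.1.1).val from hcond) (by omega)
              · simp [vbV, gadV, aIV, Fin.ext_iff]
            · obtain ⟨P'', z', hz', hj⟩ := h2
              simp [vbV, ebV] at hj
          · subst hu
            rcases h2 with h2 | h2 <;> rw [Set.mem_iUnion] at h2
            · obtain ⟨j, z', hz', hj⟩ := h2
              simp [vbV, ebV] at hj
            · obtain ⟨P'', z', hz', hj⟩ := h2
              simp only [ebV, Sum.inr.injEq, Sum.inl.injEq] at hj
              obtain ⟨rfl, hj⟩ := Sigma.mk.inj_iff.mp hj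
              rw [heq_eq_eq] at hj; subst hj
              rcases hz' with ⟨t'', hz'⟩ | hz' | ⟨g'', t'', -, hz'⟩ | ⟨g'', -, hz'⟩ | ⟨p'', hz'⟩ <;>
                simp [gadV, aIV, dIV, h1V, h2V, cV] at hz'
              obtain ⟨rfl, rfl⟩ := hz'
              have hle' : t.val ≤ (x P''.1.1).val := hle
              refine ⟨⟨t.val, by have := t.isLt; omega⟩, ?_⟩
              beta_reduce
              split
              · simp [ebV, gadV, aIV, Fin.ext_iff]
              · next hcond => exact absurd hle' hcond
      · apply ncard_le_of_subset_range (fun m : Fin (n+1) =>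
          if h : m.val ≤ (x P.1.1).val
          then vbV G P.1.1 (gadV (x P.1.1) (aIV n ⟨m.val, lt_of_le_of_lt h (x P.1.1).isLt⟩))
          else ebV G P (gadV (⟨(x P.1.1, x P.1.2), hx _ _ (hPne P)⟩ : EdgeIn G P) (aIV n ⟨m.val - 1, by have := m.isLt; omega⟩)))
        rintro u ⟨h1, h2⟩
        rw [Set.mem_insert_iff, SimpleGraph.mem_neighborSet] at h1
        rcases h1 with h1 | h1
        · subst h1
          rcases h2 with h2 | h2 <;> rw [Set.mem_iUnion] at h2 <;>
            obtain ⟨j, z', hz', hj⟩ := h2 <;> simp [vbV, ebV, connV] at hj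
        · have hr := (hmcc_adj_iff.mp h1).2
          rcases rH_conn_inv_ft P _ hr with ⟨ℓ, t, hu, hle⟩ | ⟨e, t, hu, hle⟩
          · subst hu
            rcases h2 with h2 | h2 <;> rw [Set.mem_iUnion] at h2
            · obtain ⟨j, z', hz', hj⟩ := h2
              simp only [vbV, Sum.inl.injEq, Prod.mk.injEq] at hj
              obtain ⟨rfl, rfl⟩ := hj
              rcases hz' with ⟨t'', hz'⟩ | hz' | ⟨g'', t'', -, hz'⟩ | ⟨g'', -, hz'⟩ | ⟨p'', hz'⟩ <;>
                simp [gadV, aIV, dIV, h1V, h2V, cV] at hz'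
              obtain ⟨rfl, rfl⟩ := hz'
              have hle' : t.val ≤ (x P.1.1).val := hle
              refine ⟨⟨t.val, by have := t.isLt; omega⟩, ?_⟩
              beta_reduce
              split
              · simp [vbV, gadV, aIV, Fin.ext_iff]
              · next hcond => exact absurd hle' hcond
            · obtain ⟨P'', z', hz', hj⟩ := h2
              simp [vbV, ebV] at hj
          · subst hu
            rcases h2 with h2 | h2 <;> rw [Set.mem_iUnion] at h2
            · obtain ⟨j, z', hz', hj⟩ := h2
              simp [vbV, ebV] at hj
            · obtain ⟨P'', z', hz', hj⟩ := h2
              simp only [ebV, Sum.inr.injEq, Sum.inl.injEq] at hj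
              obtain ⟨rfl, hj⟩ := Sigma.mk.inj_iff.mp hj
              rw [heq_eq_eq] at hj; subst hj
              rcases hz' with ⟨t'', hz'⟩ | hz' | ⟨g'', t'', -, hz'⟩ | ⟨g'', -, hz'⟩ | ⟨p'', hz'⟩ <;>
                simp [gadV, aIV, dIV, h1V, h2V, cV] at hz'
              obtain ⟨rfl, rfl⟩ := hz'
              have hle' : (x P''.1.1).val ≤ t.val := hle
              refine ⟨⟨t.val + 1, by have := t.isLt; omega⟩, ?_⟩
              beta_reduce
              split
              · next hcond =>
                  exact absurd (show t.val + 1 ≤ (x P''.1.1).val from hcond) (by omega)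
              · simp [ebV, gadV, aIV, Fin.ext_iff]
      · apply ncard_le_of_subset_range (fun m : Fin (n+1) =>
          if h : m.val ≤ (x P.1.2).val
          then ebV G P (gadV (⟨(x P.1.1, x P.1.2), hx _ _ (hPne P)⟩ : EdgeIn G P) (aIV n ⟨m.val, lt_of_le_of_lt h (x P.1.2).isLt⟩))
          else vbV G P.1.2 (gadV (x P.1.2) (aIV n ⟨m.val - 1, by have := m.isLt; omega⟩)))
        rintro u ⟨h1, h2⟩
        rw [Set.mem_insert_iff, SimpleGraph.mem_neighborSet] at h1
        rcases h1 with h1 | h1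
        · subst h1
          rcases h2 with h2 | h2 <;> rw [Set.mem_iUnion] at h2 <;>
            obtain ⟨j, z', hz', hj⟩ := h2 <;> simp [vbV, ebV, connV] at hj
        · have hr := (hmcc_adj_iff.mp h1).2
          rcases rH_conn_inv_tf P _ hr with ⟨ℓ, t, hu, hle⟩ | ⟨e, t, hu, hle⟩
          · subst hu
            rcases h2 with h2 | h2 <;> rw [Set.mem_iUnion] at h2
            · obtain ⟨j, z', hz', hj⟩ := h2
              simp only [vbV, Sum.inl.injEq, Prod.mk.injEq] at hj
              obtain ⟨rfl, rfl⟩ := hj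
              rcases hz' with ⟨t'', hz'⟩ | hz' | ⟨g'', t'', -, hz'⟩ | ⟨g'', -, hz'⟩ | ⟨p'', hz'⟩ <;>
                simp [gadV, aIV, dIV, h1V, h2V, cV] at hz'
              obtain ⟨rfl, rfl⟩ := hz'
              have hle' : (x P.1.2).val ≤ t.val := hle
              refine ⟨⟨t.val + 1, by have := t.isLt; omega⟩, ?_⟩
              beta_reduce
              split
              · next hcond =>
                  exact absurd (show t.val + 1 ≤ (x P.1.2).val from hcond) (by omega)
              · simp [vbV, gadV, aIV, Fin.ext_iff]
            · obtain ⟨P'', z', hz', hj⟩ := h2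
              simp [vbV, ebV] at hj
          · subst hu
            rcases h2 with h2 | h2 <;> rw [Set.mem_iUnion] at h2
            · obtain ⟨j, z', hz', hj⟩ := h2
              simp [vbV, ebV] at hj
            · obtain ⟨P'', z', hz', hj⟩ := h2
              simp only [ebV, Sum.inr.injEq, Sum.inl.injEq] at hj
              obtain ⟨rfl, hj⟩ := Sigma.mk.inj_iff.mp hj
              rw [heq_eq_eq] at hj; subst hj
              rcases hz' with ⟨t'', hz'⟩ | hz' | ⟨g'', t'', -, hz'⟩ | ⟨g'', -, hz'⟩ | ⟨p'', hz'⟩ <;>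
                simp [gadV, aIV, dIV, h1V, h2V, cV] at hz'
              obtain ⟨rfl, rfl⟩ := hz'
              have hle' : t.val ≤ (x P''.1.2).val := hle
              refine ⟨⟨t.val, by have := t.isLt; omega⟩, ?_⟩
              beta_reduce
              split
              · simp [ebV, gadV, aIV, Fin.ext_iff]
              · next hcond => exact absurd hle' hcond
      · apply ncard_le_of_subset_range (fun m : Fin (n+1) =>
          if h : m.val ≤ (x P.1.2).val
          then vbV G P.1.2 (gadV (x P.1.2) (aIV n ⟨m.val, lt_of_le_of_lt h (x P.1.2).isLt⟩))
          else ebV G P (gadV (⟨(x P.1.1, x P.1.2), hx _ _ (hPne P)⟩ : EdgeIn G P) (aIV n ⟨m.val - 1, by have := m.isLt; omega⟩)))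
        rintro u ⟨h1, h2⟩
        rw [Set.mem_insert_iff, SimpleGraph.mem_neighborSet] at h1
        rcases h1 with h1 | h1
        · subst h1
          rcases h2 with h2 | h2 <;> rw [Set.mem_iUnion] at h2 <;>
            obtain ⟨j, z', hz', hj⟩ := h2 <;> simp [vbV, ebV, connV] at hj
        · have hr := (hmcc_adj_iff.mp h1).2
          rcases rH_conn_inv_tt P _ hr with ⟨ℓ, t, hu, hle⟩ | ⟨e, t, hu, hle⟩
          · subst hu
            rcases h2 with h2 | h2 <;> rw [Set.mem_iUnion] at h2
            · obtain ⟨j, z', hz', hj⟩ := h2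
              simp only [vbV, Sum.inl.injEq, Prod.mk.injEq] at hj
              obtain ⟨rfl, rfl⟩ := hj
              rcases hz' with ⟨t'', hz'⟩ | hz' | ⟨g'', t'', -, hz'⟩ | ⟨g'', -, hz'⟩ | ⟨p'', hz'⟩ <;>
                simp [gadV, aIV, dIV, h1V, h2V, cV] at hz'
              obtain ⟨rfl, rfl⟩ := hz'
              have hle' : t.val ≤ (x P.1.2).val := hle
              refine ⟨⟨t.val, by have := t.isLt; omega⟩, ?_⟩
              beta_reduce
              split
              · simp [vbV, gadV, aIV, Fin.ext_iff]
              · next hcond => exact absurd hle' hcond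
            · obtain ⟨P'', z', hz', hj⟩ := h2
              simp [vbV, ebV] at hj
          · subst hu
            rcases h2 with h2 | h2 <;> rw [Set.mem_iUnion] at h2
            · obtain ⟨j, z', hz', hj⟩ := h2
              simp [vbV, ebV] at hj
            · obtain ⟨P'', z', hz', hj⟩ := h2
              simp only [ebV, Sum.inr.injEq, Sum.inl.injEq] at hj
              obtain ⟨rfl, hj⟩ := Sigma.mk.inj_iff.mp hj
              rw [heq_eq_eq] at hj; subst hj
              rcases hz' with ⟨t'', hz'⟩ | hz' | ⟨g'', t'', -, hz'⟩ | ⟨g'', -, hz'⟩ | ⟨p'', hz'⟩ <;>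
                simp [gadV, aIV, dIV, h1V, h2V, cV] at hz'
              obtain ⟨rfl, rfl⟩ := hz'
              have hle' : (x P''.1.2).val ≤ t.val := hle
              refine ⟨⟨t.val + 1, by have := t.isLt; omega⟩, ?_⟩
              beta_reduce
              split
              · next hcond =>
                  exact absurd (show t.val + 1 ≤ (x P''.1.2).val from hcond) (by omega)
              · simp [ebV, gadV, aIV, Fin.ext_iff]
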